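/- Let E be a finite totally ordered set. Any oriented d-simplex over E (a (d+1)-tuple of signed indices with pairwise distinct underlying elements) is equivalent, under the equivalence relation generated by [x₁,...,x_{d+1}] ∼ [x₁,...,x_{i-1}, x̄_{i+1}, x_i, x_{i+2},...,x_{d+1}], to exactly one simplex of the form [e₁,...,e_{d+1}] or [e₁,...,e_d, ē_{d+1}] with e₁ < e₂ < ... < e_{d+1} in E. -/

import Mathlib

/-- The bar involution on signed indices: `(e, b) ↦ (e, ¬b)`. -/
def bar {α : Type*} (x : α × Bool) : α × Bool := (x.1, !x.2)

/-- One elementary move on oriented `d`-simplices: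
`[x₁,…,x_{d+1}] ∼ [x₁,…,x_{i-1}, x̄_{i+1}, x_i, x_{i+2},…,x_{d+1}]`. -/
def simplexStep {α : Type*} (d : ℕ) (σ τ : Fin (d + 1) → α × Bool) : Prop :=
  ∃ i j : Fin (d + 1), j.val = i.val + 1 ∧
    τ = fun m => if m = i then bar (σ j) else if m = j then σ i else σ m

namespace SimplexNF

set_option linter.unusedSectionVars false

variable {α : Type*} [LinearOrder α] {d : ℕ}

/-- The result of applying the elementary move at positions `i`, `j`. -/
def mov (σ : Fin (d + 1) → α × Bool) (i j : Fin (d + 1)) : Fin (d + 1) → α × Bool :=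
  fun m => if m = i then bar (σ j) else if m = j then σ i else σ m

lemma step_mov (σ : Fin (d + 1) → α × Bool) (i j : Fin (d + 1)) (h : j.val = i.val + 1) :
    simplexStep d σ (mov σ i j) := ⟨i, j, h, rfl⟩

lemma mov_fst (σ : Fin (d + 1) → α × Bool) (i j m : Fin (d + 1)) :
    (mov σ i j m).1 = (σ (Equiv.swap i j m)).1 := by
  unfold mov
  rcases eq_or_ne m i with rfl | hmi
  · simp [Equiv.swap_apply_left, bar]
  · rcases eq_or_ne m j with rfl | hmj
    · simp [Equiv.swap_apply_right, hmi]
    · simp [hmi, hmj, Equiv.swap_apply_of_ne_of_ne hmi hmj]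

/-- The sign of a signed index. -/
def sg (x : α × Bool) : ℤˣ := if x.2 then 1 else -1

lemma sg_bar (x : α × Bool) : sg (bar x) = -sg x := by
  rcases x with ⟨a, b⟩; cases b <;> simp [sg, bar]

/-- The total sign of a simplex. -/
def B (σ : Fin (d + 1) → α × Bool) : ℤˣ := ∏ m, sg (σ m)

lemma B_mov (σ : Fin (d + 1) → α × Bool) (i j : Fin (d + 1)) (hij : i ≠ j) :
    B (mov σ i j) = -B σ := by
  have h : ∀ m, sg (mov σ i j m) =
      (if m = i then (-1 : ℤˣ) else 1) * sg (σ (Equiv.swap i j m)) := by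
    intro m
    rcases eq_or_ne m i with rfl | hmi
    · simp [mov, sg_bar, Equiv.swap_apply_left]
    · rcases eq_or_ne m j with rfl | hmj
      · simp [mov, hmi, Equiv.swap_apply_right, hij.symm]
      · simp [mov, hmi, hmj, Equiv.swap_apply_of_ne_of_ne hmi hmj]
  calc B (mov σ i j)
      = ∏ m, ((if m = i then (-1 : ℤˣ) else 1) * sg (σ (Equiv.swap i j m))) :=
        Finset.prod_congr rfl (fun m _ => h m)
    _ = (∏ m, if m = i then (-1 : ℤˣ) else 1) * ∏ m, sg (σ (Equiv.swap i j m)) :=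
        Finset.prod_mul_distrib
    _ = -B σ := by
        rw [Equiv.prod_comp (Equiv.swap i j) (fun m => sg (σ m))]
        simp [B, Finset.prod_ite_eq']

/-- Key invariant: an equivalence gives a permutation of the underlying values whose
sign matches the product of the total signs. -/
lemma eqv_perm {σ τ : Fin (d + 1) → α × Bool} (h : Relation.EqvGen (simplexStep d) σ τ) :
    ∃ p : Equiv.Perm (Fin (d + 1)), (∀ m, (τ m).1 = (σ (p m)).1) ∧
      Equiv.Perm.sign p = B σ * B τ := by
  induction h with
  | rel x y hxy =>
    obtain ⟨i, j, hji, rfl⟩ := hxy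
    have hij : i ≠ j := by
      intro h; rw [h] at hji; omega
    refine ⟨Equiv.swap i j, fun m => mov_fst x i j m, ?_⟩
    change _ = B x * B (mov x i j)
    rw [B_mov x i j hij, Equiv.Perm.sign_swap hij, mul_neg, Int.units_mul_self]
  | refl x =>
    exact ⟨1, fun m => rfl, by rw [map_one, Int.units_mul_self]⟩
  | symm x y hxy ih =>
    obtain ⟨p, hp, hs⟩ := ih
    refine ⟨p⁻¹, fun m => ?_, ?_⟩
    · have := hp (p⁻¹ m)
      rw [show p (p⁻¹ m) = m from p.apply_symm_apply m] at this
      exact this.symm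
    · calc Equiv.Perm.sign p⁻¹ = (Equiv.Perm.sign p)⁻¹ := map_inv _ p
        _ = Equiv.Perm.sign p := Int.units_inv_eq_self _
        _ = B x * B y := hs
        _ = B y * B x := mul_comm _ _
  | trans x y z hxy hyz ih1 ih2 =>
    obtain ⟨p, hp, hps⟩ := ih1
    obtain ⟨q, hq, hqs⟩ := ih2
    refine ⟨p * q, fun m => ?_, ?_⟩
    · rw [hq m, hp (q m)]; rfl
    · rw [map_mul, hps, hqs, mul_assoc, ← mul_assoc (B y) (B y), Int.units_mul_self, one_mul]

/-- The set of inversions of a simplex. -/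
def invs (σ : Fin (d + 1) → α × Bool) : Finset (Fin (d + 1) × Fin (d + 1)) :=
  Finset.univ.filter fun p => p.1 < p.2 ∧ (σ p.2).1 < (σ p.1).1

lemma swap_lt (i j a b : Fin (d + 1)) (hji : j.val = i.val + 1) (hab : a < b)
    (hne : ¬(a = i ∧ b = j)) : Equiv.swap i j a < Equiv.swap i j b := by
  have hab' : a.val < b.val := hab
  rcases eq_or_ne a i with rfl | hai
  · have hbj : b ≠ j := fun h => hne ⟨rfl, h⟩
    have hbi : b ≠ a := hab.ne'
    have hbj' : b.val ≠ j.val := fun h => hbj (Fin.ext h)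
    rw [Equiv.swap_apply_left, Equiv.swap_apply_of_ne_of_ne hbi hbj]
    rw [Fin.lt_def]
    omega
  · rcases eq_or_ne a j with rfl | haj
    · have hbi : b ≠ i := by
        intro h
        rw [Fin.ext_iff] at h
        omega
      have hbj : b ≠ a := hab.ne'
      rw [Equiv.swap_apply_right, Equiv.swap_apply_of_ne_of_ne hbi hbj]
      rw [Fin.lt_def]
      omega
    · rw [Equiv.swap_apply_of_ne_of_ne hai haj]
      rcases eq_or_ne b i with rfl | hbi
      · rw [Equiv.swap_apply_left, Fin.lt_def]
        omega
      · rcases eq_or_ne b j with rfl | hbj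
        · have hai' : a.val ≠ i.val := fun h => hai (Fin.ext h)
          rw [Equiv.swap_apply_right, Fin.lt_def]
          omega
        · rw [Equiv.swap_apply_of_ne_of_ne hbi hbj]
          exact hab

lemma invs_mov_card_lt (σ : Fin (d + 1) → α × Bool) (i j : Fin (d + 1))
    (hji : j.val = i.val + 1) (hd : (σ j).1 < (σ i).1) :
    (invs (mov σ i j)).card < (invs σ).card := by
  have hij : i ≠ j := by intro h; rw [h] at hji; omega
  have hijlt : i < j := by rw [Fin.lt_def]; omega
  have hmem : (i, j) ∈ invs σ := by
    simp only [invs, Finset.mem_filter, Finset.mem_univ, true_and]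
    exact ⟨hijlt, hd⟩
  have hle : (invs (mov σ i j)).card ≤ ((invs σ).erase (i, j)).card := by
    apply Finset.card_le_card_of_injOn (fun q => (Equiv.swap i j q.1, Equiv.swap i j q.2))
    · intro q hq
      simp only [invs, Finset.mem_coe, Finset.mem_filter, Finset.mem_univ, true_and] at hq
      obtain ⟨hlt, hval⟩ := hq
      rw [mov_fst, mov_fst] at hval
      have hqne : ¬(q.1 = i ∧ q.2 = j) := by
        rintro ⟨h1, h2⟩
        rw [h1, h2, Equiv.swap_apply_left, Equiv.swap_apply_right] at hval
        exact absurd hval (not_lt.mpr hd.le)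
      rw [Finset.mem_coe, Finset.mem_erase]
      constructor
      · intro hcontra
        rw [Prod.ext_iff] at hcontra
        obtain ⟨h1, h2⟩ := hcontra
        have hq1 : q.1 = j := by
          have := congrArg (Equiv.swap i j) h1
          rwa [Equiv.swap_apply_self, Equiv.swap_apply_left] at this
        have hq2 : q.2 = i := by
          have := congrArg (Equiv.swap i j) h2
          rwa [Equiv.swap_apply_self, Equiv.swap_apply_right] at this
        rw [hq1, hq2] at hlt
        exact absurd hijlt (not_lt.mpr hlt.le)
      · simp only [invs, Finset.mem_filter, Finset.mem_univ, true_and]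
        exact ⟨swap_lt i j q.1 q.2 hji hlt hqne, hval⟩
    · intro a _ b _ hab
      rw [Prod.ext_iff] at hab ⊢
      exact ⟨(Equiv.swap i j).injective hab.1, (Equiv.swap i j).injective hab.2⟩
  have h1 := Finset.card_erase_lt_of_mem hmem
  omega

/-- Phase 1: sorting the underlying values. -/
lemma phase1 (N : ℕ) (σ : Fin (d + 1) → α × Bool) (hc : (invs σ).card ≤ N)
    (hinj : Function.Injective fun m => (σ m).1) :
    ∃ τ, Relation.EqvGen (simplexStep d) σ τ ∧ StrictMono fun m => (τ m).1 := by
  induction N generalizing σ with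
  | zero =>
    refine ⟨σ, Relation.EqvGen.refl σ, ?_⟩
    rw [Fin.strictMono_iff_lt_succ]
    intro k
    by_contra hk
    have hne : (σ k.castSucc).1 ≠ (σ k.succ).1 := by
      intro h
      have := hinj h
      exact absurd this (Fin.castSucc_lt_succ (i := k)).ne
    have hdesc : (σ k.succ).1 < (σ k.castSucc).1 :=
      lt_of_le_of_ne (not_lt.mp hk) fun h => hne h.symm
    have hmem : (k.castSucc, k.succ) ∈ invs σ := by
      simp only [invs, Finset.mem_filter, Finset.mem_univ, true_and]
      exact ⟨Fin.castSucc_lt_succ (i := k), hdesc⟩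
    have := Finset.card_pos.mpr ⟨_, hmem⟩
    omega
  | succ n ih =>
    by_cases hs : StrictMono fun m => (σ m).1
    · exact ⟨σ, Relation.EqvGen.refl σ, hs⟩
    · rw [Fin.strictMono_iff_lt_succ] at hs
      push_neg at hs
      obtain ⟨k, hk⟩ := hs
      have hne : (σ k.castSucc).1 ≠ (σ k.succ).1 := by
        intro h
        have := hinj h
        exact absurd this (Fin.castSucc_lt_succ (i := k)).ne
      have hdesc : (σ k.succ).1 < (σ k.castSucc).1 :=
        lt_of_le_of_ne hk fun h => hne h.symm
      have hji : (k.succ : Fin (d + 1)).val = (k.castSucc : Fin (d + 1)).val + 1 := by simp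
      have hcard := invs_mov_card_lt σ k.castSucc k.succ hji hdesc
      have hinj' : Function.Injective fun m => (mov σ k.castSucc k.succ m).1 := by
        have heq : (fun m => (mov σ k.castSucc k.succ m).1) =
            (fun m => (σ m).1) ∘ (Equiv.swap k.castSucc k.succ) :=
          funext (mov_fst σ k.castSucc k.succ)
        rw [heq]
        exact hinj.comp (Equiv.swap k.castSucc k.succ).injective
      obtain ⟨τ, hτ1, hτ2⟩ := ih (mov σ k.castSucc k.succ) (by omega) hinj'
      exact ⟨τ, Relation.EqvGen.trans _ _ _
        (Relation.EqvGen.rel _ _ (step_mov σ k.castSucc k.succ hji)) hτ1, hτ2⟩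

/-- The weight used to push the bars to the last coordinate. -/
def W (σ : Fin (d + 1) → α × Bool) : ℕ :=
  ∑ m : Fin (d + 1), if (σ m).2 then 0 else d - m.val

/-- Phase 2: normalizing the bars. -/
lemma phase2 (N : ℕ) (σ : Fin (d + 1) → α × Bool) (hw : W σ ≤ N)
    (hs : StrictMono fun m => (σ m).1) :
    ∃ τ, Relation.EqvGen (simplexStep d) σ τ ∧ (StrictMono fun m => (τ m).1) ∧
      ∀ m, m ≠ Fin.last d → (τ m).2 = true := by
  induction N generalizing σ with
  | zero =>
    refine ⟨σ, Relation.EqvGen.refl σ, hs, ?_⟩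
    intro m hm
    by_contra hfalse
    have hb : (σ m).2 = false := by
      cases h : (σ m).2
      · rfl
      · exact absurd h hfalse
    have hmv : m.val < d := Fin.val_lt_last hm
    have hle : (if (σ m).2 then 0 else d - m.val) ≤ W σ := by
      unfold W
      exact Finset.single_le_sum (f := fun k : Fin (d + 1) => if (σ k).2 = true then 0 else d - k.val)
        (fun k _ => Nat.zero_le _) (Finset.mem_univ m)
    rw [hb] at hle
    simp only [Bool.false_eq_true, if_false] at hle
    omega
  | succ n ih =>
    by_cases hall : ∀ m, m ≠ Fin.last d → (σ m).2 = true
    · exact ⟨σ, Relation.EqvGen.refl σ, hs, hall⟩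
    · push_neg at hall
      obtain ⟨i, hil, hib⟩ := hall
      have hib' : (σ i).2 = false := by
        cases h : (σ i).2
        · rfl
        · exact absurd h hib
      have hiv : i.val < d := Fin.val_lt_last hil
      obtain ⟨j, hji⟩ : ∃ j : Fin (d + 1), j.val = i.val + 1 := ⟨⟨i.val + 1, by omega⟩, rfl⟩
      have hij : i ≠ j := by
        intro h; rw [h] at hji; omega
      set τ := mov (mov σ i j) i j with hτ
      have hτeq : ∀ m, τ m = if m = i then bar (σ i) else if m = j then bar (σ j) else σ m := by
        intro m
        rw [hτ]
        rcases eq_or_ne m i with rfl | hmi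
        · simp [mov, hij, hij.symm]
        · rcases eq_or_ne m j with rfl | hmj
          · simp [mov, hij, hij.symm, hmi]
          · simp [mov, hmi, hmj]
      have hfst : (fun m => (τ m).1) = fun m => (σ m).1 := by
        funext m
        rw [hτeq m]
        split_ifs with h1 h2
        · rw [h1]; rfl
        · rw [h2]; rfl
        · rfl
      have hτi2 : (τ i).2 = true := by
        rw [hτeq i, if_pos rfl]
        simp [bar, hib']
      have key : ∀ ρ : Fin (d + 1) → α × Bool,
          W ρ = (if (ρ i).2 then 0 else d - i.val) +
            ((if (ρ j).2 then 0 else d - j.val) +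
              ∑ m ∈ (Finset.univ.erase i).erase j, (if (ρ m).2 then 0 else d - m.val)) := by
        intro ρ
        rw [W, ← Finset.add_sum_erase _ _ (Finset.mem_univ i),
          ← Finset.add_sum_erase _ _ (Finset.mem_erase.mpr ⟨hij.symm, Finset.mem_univ j⟩)]
      have hsum_eq : ∑ m ∈ (Finset.univ.erase i).erase j, (if (τ m).2 then 0 else d - m.val) =
          ∑ m ∈ (Finset.univ.erase i).erase j, (if (σ m).2 then 0 else d - m.val) := by
        apply Finset.sum_congr rfl
        intro m hm
        rw [Finset.mem_erase, Finset.mem_erase] at hm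
        rw [hτeq m, if_neg hm.2.1, if_neg hm.1]
      have hWlt : W τ < W σ := by
        rw [key τ, key σ, hτi2, hib', hsum_eq]
        simp only [if_true, Bool.false_eq_true, if_false]
        obtain ⟨A, hA⟩ : ∃ A, (if (τ j).2 = true then 0 else d - j.val) = A := ⟨_, rfl⟩
        obtain ⟨C, hC⟩ : ∃ C, (if (σ j).2 = true then 0 else d - j.val) = C := ⟨_, rfl⟩
        have hA' : A ≤ d - j.val := by rw [← hA]; split <;> omega
        rw [hA, hC]
        omega
      have hstep2 : Relation.EqvGen (simplexStep d) σ τ :=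
        Relation.EqvGen.trans _ _ _
          (Relation.EqvGen.rel _ _ (step_mov σ i j hji))
          (Relation.EqvGen.rel _ _ (step_mov (mov σ i j) i j hji))
      have hs' : StrictMono fun m => (τ m).1 := by rw [hfst]; exact hs
      obtain ⟨ρ, h1, h2, h3⟩ := ih τ (by omega) hs'
      exact ⟨ρ, Relation.EqvGen.trans _ _ _ hstep2 h1, h2, h3⟩

lemma B_of_normal (τ : Fin (d + 1) → α × Bool)
    (hbars : ∀ m, m ≠ Fin.last d → (τ m).2 = true) :
    B τ = sg (τ (Fin.last d)) :=
  Fintype.prod_eq_single _ fun m hm => by simp [sg, hbars m hm]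

end SimplexNF

/-- every oriented `d`-simplex over a finite totally ordered set (a
`(d+1)`-tuple of signed indices with pairwise distinct underlying elements) is
equivalent, under the equivalence relation generated by the elementary moves, to
exactly one simplex of the form `[e₁,…,e_{d+1}]` or `[e₁,…,e_d, ē_{d+1}]` with
`e₁ < … < e_{d+1}`, i.e. with strictly increasing underlying elements and all entries
except possibly the last unbarred. -/
theorem simplex_normal_form {α : Type*} [LinearOrder α] (d : ℕ)
    (σ : Fin (d + 1) → α × Bool)
    (hσ : Function.Injective fun i => (σ i).1) :
    ∃! τ : Fin (d + 1) → α × Bool,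
      Relation.EqvGen (simplexStep d) σ τ ∧
      StrictMono (fun i => (τ i).1) ∧
      ∀ i : Fin (d + 1), i ≠ Fin.last d → (τ i).2 = true := by
  obtain ⟨τ₁, h1, hmono1⟩ := SimplexNF.phase1 (SimplexNF.invs σ).card σ le_rfl hσ
  obtain ⟨τ, h2, hmono, hbars⟩ := SimplexNF.phase2 (SimplexNF.W τ₁) τ₁ le_rfl hmono1
  have hστ : Relation.EqvGen (simplexStep d) σ τ := Relation.EqvGen.trans _ _ _ h1 h2
  refine ⟨τ, ⟨hστ, hmono, hbars⟩, ?_⟩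
  rintro τ' ⟨h1', hmono', hbars'⟩
  have heq : Relation.EqvGen (simplexStep d) τ τ' :=
    Relation.EqvGen.trans _ _ _ (Relation.EqvGen.symm _ _ hστ) h1'
  obtain ⟨p, hp, hsign⟩ := SimplexNF.eqv_perm heq
  have hpmono : StrictMono (⇑p) := by
    intro a b hab
    have h2ab : (τ (p a)).1 < (τ (p b)).1 := by
      rw [← hp a, ← hp b]
      exact hmono' hab
    exact hmono.lt_iff_lt.mp h2ab
  have hrange : Set.range ⇑p = Set.range (id : Fin (d + 1) → Fin (d + 1)) := by
    rw [Set.range_id]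
    exact Set.range_eq_univ.mpr p.surjective
  haveI : WellFoundedLT (Fin (d + 1)) := inferInstance
  have hpid : ⇑p = id :=
    (StrictMono.range_inj (β := Fin (d + 1)) (γ := Fin (d + 1)) hpmono
      (strictMono_id (α := Fin (d + 1)))).mp hrange
  have hp1 : p = 1 := Equiv.ext fun m => congrFun hpid m
  rw [hp1, map_one] at hsign
  rw [SimplexNF.B_of_normal τ hbars, SimplexNF.B_of_normal τ' hbars'] at hsign
  have hlast : (τ' (Fin.last d)).2 = (τ (Fin.last d)).2 := by
    cases hb : (τ (Fin.last d)).2 <;> cases hb' : (τ' (Fin.last d)).2 <;>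
      simp [SimplexNF.sg, hb, hb'] at hsign ⊢
  funext m
  have hfst : (τ' m).1 = (τ m).1 := by
    rw [hp m, hp1]
    rfl
  refine Prod.ext hfst ?_
  by_cases hm : m = Fin.last d
  · rw [hm]; exact hlast
  · rw [hbars' m hm, hbars m hm]
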